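/- arXiv:1209.0180 — 4 statements merged into one kernel-verified Lean document; each statement's English description precedes it below -/
import Mathlib

section
/- Let n(x) := (2π)^{-1/2} exp(−x²/2) be the standard normal density and N(x) := ∫_{-∞}^x n(y) dy the standard normal distribution function, and define G(r,t) := 2·N(−r/√t) − 1 for r ∈ ℝ and t > 0. Let (Ω, F, P) be a probability space and A : Ω → ℝ a random variable with A > 0 almost surely. Define ζ(r) := E[G(r, A)] for r < 0. Then ζ is twice differentiable on (−∞, 0) with ζ'(r) = E[−(2/√A)·n(r/√A)] and ζ''(r) = E[(2r/A^{3/2})·n(r/√A)], so that ζ''(r) ≤ 0 for every r < 0 (ζ is concave on (−∞,0)), and moreover |ζ'(r)| ≤ 2/(|r|·√(2πe)) for every r < 0. -/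
open MeasureTheory

/-- The standard normal density `n(x) = (2π)^{-1/2} exp(-x²/2)`. -/
noncomputable def stdGaussPDF (x : ℝ) : ℝ :=
  (Real.sqrt (2 * Real.pi))⁻¹ * Real.exp (-x ^ 2 / 2)

/-- The standard normal distribution function `N(x) = ∫_{-∞}^x n(y) dy`. -/
noncomputable def stdGaussCDF (x : ℝ) : ℝ :=
  ∫ y in Set.Iic x, stdGaussPDF y

/-- `G(r,t) = 2 N(−r/√t) − 1`. -/
noncomputable def Gfun (r t : ℝ) : ℝ :=
  2 * stdGaussCDF (-r / Real.sqrt t) - 1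

section AuxStmt8
open Real

lemma pdf_cont : Continuous stdGaussPDF := by
  unfold stdGaussPDF
  fun_prop

lemma pdf_nonneg (x : ℝ) : 0 ≤ stdGaussPDF x := by
  unfold stdGaussPDF
  positivity

lemma pdf_even (x : ℝ) : stdGaussPDF (-x) = stdGaussPDF x := by
  simp [stdGaussPDF]

lemma pdf_integrable : Integrable stdGaussPDF := by
  have h : Integrable (fun x : ℝ => Real.exp (-(1/2 : ℝ) * x ^ 2)) :=
    integrable_exp_neg_mul_sq (by norm_num)
  have := h.const_mul (Real.sqrt (2 * Real.pi))⁻¹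
  refine this.congr (Filter.Eventually.of_forall fun x => ?_)
  simp only [stdGaussPDF]
  ring_nf

lemma pdf_total : ∫ x, stdGaussPDF x = 1 := by
  have h : ∫ x : ℝ, Real.exp (-(1/2 : ℝ) * x ^ 2) = Real.sqrt (π / (1/2)) :=
    integral_gaussian (1/2)
  have h2 : ∫ x, stdGaussPDF x
      = (Real.sqrt (2 * Real.pi))⁻¹ * ∫ x : ℝ, Real.exp (-(1/2 : ℝ) * x ^ 2) := by
    rw [← integral_const_mul]
    congr 1; ext x; simp only [stdGaussPDF]; ring_nf
  rw [h2, h]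
  rw [show π / (1/2 : ℝ) = 2 * π by ring]
  rw [inv_mul_cancel₀]
  positivity

lemma cdf_le_one (x : ℝ) : stdGaussCDF x ≤ 1 := by
  rw [← pdf_total]
  exact setIntegral_le_integral pdf_integrable
    (Filter.Eventually.of_forall fun y => pdf_nonneg y)

lemma cdf_nonneg (x : ℝ) : 0 ≤ stdGaussCDF x :=
  setIntegral_nonneg measurableSet_Iic fun y _ => pdf_nonneg y

lemma hasDerivAt_cdf (x : ℝ) : HasDerivAt stdGaussCDF (stdGaussPDF x) x := by
  have key : ∀ y : ℝ, stdGaussCDF y = stdGaussCDF 0 + ∫ t in (0:ℝ)..y, stdGaussPDF t := by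
    intro y
    have := intervalIntegral.integral_Iic_sub_Iic (f := stdGaussPDF) (a := (0:ℝ)) (b := y)
      pdf_integrable.integrableOn pdf_integrable.integrableOn
    simp only [stdGaussCDF]
    linarith [this]
  have hd : HasDerivAt (fun y => stdGaussCDF 0 + ∫ t in (0:ℝ)..y, stdGaussPDF t)
      (stdGaussPDF x) x := by
    refine HasDerivAt.const_add _ ?_
    exact intervalIntegral.integral_hasDerivAt_right
      (pdf_integrable.intervalIntegrable)
      (pdf_cont.aestronglyMeasurable.stronglyMeasurableAtFilter)
      pdf_cont.continuousAt
  exact hd.congr_of_eventuallyEq (Filter.Eventually.of_forall key)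

lemma hasDerivAt_pdf (x : ℝ) : HasDerivAt stdGaussPDF (-x * stdGaussPDF x) x := by
  unfold stdGaussPDF
  have h1 : HasDerivAt (fun y : ℝ => -y ^ 2 / 2) (-x) x := by
    have := (hasDerivAt_pow 2 x).neg.div_const 2
    refine this.congr_deriv ?_
    norm_num
    ring
  have := (h1.exp).const_mul (Real.sqrt (2 * Real.pi))⁻¹
  refine this.congr_deriv ?_
  ring

lemma hasDerivAt_Gfun {t : ℝ} (ht : 0 < t) (x : ℝ) :
    HasDerivAt (fun r => Gfun r t)
      (-(2 / Real.sqrt t) * stdGaussPDF (x / Real.sqrt t)) x := by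
  have hst : (0:ℝ) < Real.sqrt t := Real.sqrt_pos.2 ht
  have h1 : HasDerivAt (fun r : ℝ => -r / Real.sqrt t) (-(Real.sqrt t)⁻¹) x := by
    have := (hasDerivAt_id x).neg.div_const (Real.sqrt t)
    simpa [neg_div, one_div] using this
  have h2 := ((hasDerivAt_cdf (-x / Real.sqrt t)).comp x h1).const_mul 2
  have h3 : HasDerivAt (fun r => Gfun r t)
      (2 * (stdGaussPDF (-x / Real.sqrt t) * -(Real.sqrt t)⁻¹)) x := by
    unfold Gfun
    exact h2.sub_const 1
  convert h3 using 1
  rw [show -x / Real.sqrt t = -(x / Real.sqrt t) by ring, pdf_even]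
  field_simp

lemma rpow_three_halves {t : ℝ} (ht : 0 < t) :
    t ^ ((3:ℝ)/2) = t * Real.sqrt t := by
  rw [show (3:ℝ)/2 = 1 + 1/2 by norm_num, Real.rpow_add ht, Real.rpow_one,
    ← Real.sqrt_eq_rpow]

lemma hasDerivAt_Gderiv {t : ℝ} (ht : 0 < t) (x : ℝ) :
    HasDerivAt (fun y => -(2 / Real.sqrt t) * stdGaussPDF (y / Real.sqrt t))
      (2 * x / t ^ ((3:ℝ)/2) * stdGaussPDF (x / Real.sqrt t)) x := by
  have hst : (0:ℝ) < Real.sqrt t := Real.sqrt_pos.2 ht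
  have h1 : HasDerivAt (fun y : ℝ => y / Real.sqrt t) ((Real.sqrt t)⁻¹) x := by
    have := (hasDerivAt_id x).div_const (Real.sqrt t)
    simpa [one_div] using this
  have h2 := ((hasDerivAt_pdf (x / Real.sqrt t)).comp x h1).const_mul (-(2 / Real.sqrt t))
  refine h2.congr_deriv ?_
  rw [rpow_three_halves ht]
  have h3 : Real.sqrt t * Real.sqrt t = t := Real.mul_self_sqrt ht.le
  field_simp
  ring_nf
  rw [Real.sq_sqrt ht.le]
  ring

-- key scalar inequality: u * exp(-u^2/2) ≤ exp(-1/2) for u ≥ 0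
lemma key_ineq1 {u : ℝ} (hu : 0 ≤ u) : u * Real.exp (-u^2/2) ≤ Real.exp (-(1:ℝ)/2) := by
  rw [show (-u^2/2 : ℝ) = -(1:ℝ)/2 - (u^2-1)/2 by ring]
  have h := Real.add_one_le_exp ((u^2-1)/2)
  have hegt : (u^2+1)/2 ≤ Real.exp ((u^2-1)/2) := by linarith
  have hu2 : u ≤ (u^2+1)/2 := by nlinarith [sq_nonneg (u-1)]
  have hle : u ≤ Real.exp ((u^2-1)/2) := le_trans hu2 hegt
  calc u * Real.exp (-(1:ℝ)/2 - (u^2-1)/2)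
      ≤ Real.exp ((u^2-1)/2) * Real.exp (-(1:ℝ)/2 - (u^2-1)/2) :=
        mul_le_mul_of_nonneg_right hle (Real.exp_pos _).le
    _ = Real.exp (-(1:ℝ)/2) := by rw [← Real.exp_add]; ring_nf

-- u^3 * exp(-u^2/2) ≤ 6
lemma key_ineq2 {u : ℝ} (hu : 0 ≤ u) : u^3 * Real.exp (-u^2/2) ≤ 6 := by
  have h := Real.add_one_le_exp (u^2/4)
  have hsq : (1 + u^2/4)^2 ≤ Real.exp (u^2/2) := by
    have h2 : (1 + u^2/4)^2 ≤ (Real.exp (u^2/4))^2 := by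
      apply pow_le_pow_left₀ (by positivity) (by linarith) 2
    calc (1 + u^2/4)^2 ≤ (Real.exp (u^2/4))^2 := h2
      _ = Real.exp (u^2/2) := by
        rw [← Real.exp_nat_mul]; congr 1; push_cast; ring
  have hpos : (0:ℝ) < Real.exp (u^2/2) := Real.exp_pos _
  rw [show (-u^2/2 : ℝ) = -(u^2/2) by ring, Real.exp_neg]
  rw [mul_inv_le_iff₀ hpos]
  calc u^3 ≤ 6 * (1 + u^2/4)^2 := by nlinarith [sq_nonneg (u - 2), sq_nonneg u, sq_nonneg (u^2 - 2*u)]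
    _ ≤ 6 * Real.exp (u^2/2) := by linarith

lemma bound1 {x t : ℝ} (hx : x ≠ 0) (ht : 0 < t) :
    2 / Real.sqrt t * stdGaussPDF (x / Real.sqrt t)
      ≤ 2 / (|x| * Real.sqrt (2 * Real.pi * Real.exp 1)) := by
  have hst : (0:ℝ) < Real.sqrt t := Real.sqrt_pos.2 ht
  set u := |x| / Real.sqrt t with hu
  have hupos : 0 < u := div_pos (abs_pos.2 hx) hst
  have hxa : (0:ℝ) < |x| := abs_pos.2 hx
  have hsq : (x / Real.sqrt t) ^ 2 = u ^ 2 := by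
    rw [hu, div_pow, div_pow, sq_abs]
  have hpdf : stdGaussPDF (x / Real.sqrt t) = (Real.sqrt (2 * Real.pi))⁻¹ * Real.exp (-u^2/2) := by
    rw [stdGaussPDF, hsq]
  have hinv : 2 / Real.sqrt t = 2 * u / |x| := by
    rw [hu]; field_simp
  rw [hpdf, hinv]
  have hsp : Real.sqrt (2 * Real.pi * Real.exp 1)
      = Real.sqrt (2 * Real.pi) * Real.exp ((1:ℝ)/2) := by
    rw [Real.sqrt_mul (by positivity), Real.sqrt_eq_rpow (Real.exp 1), Real.exp_one_rpow]
  rw [hsp]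
  have h1 : u * Real.exp (-u^2/2) ≤ Real.exp (-(1:ℝ)/2) := key_ineq1 hupos.le
  have h2π : (0:ℝ) < Real.sqrt (2 * Real.pi) := by positivity
  rw [div_mul_eq_mul_div, div_le_div_iff₀ hxa (by positivity)]
  have he : Real.exp (-(1:ℝ)/2) * Real.exp ((1:ℝ)/2) = 1 := by
    rw [← Real.exp_add]; norm_num
  calc 2 * u * ((Real.sqrt (2*Real.pi))⁻¹ * Real.exp (-u^2/2)) * (|x| * (Real.sqrt (2*Real.pi) * Real.exp ((1:ℝ)/2)))
      = 2 * (u * Real.exp (-u^2/2)) * Real.exp ((1:ℝ)/2) * ((Real.sqrt (2*Real.pi))⁻¹ * Real.sqrt (2*Real.pi)) * |x| := by ring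
    _ = 2 * (u * Real.exp (-u^2/2)) * Real.exp ((1:ℝ)/2) * |x| := by
        rw [inv_mul_cancel₀ (ne_of_gt h2π)]; ring
    _ ≤ 2 * Real.exp (-(1:ℝ)/2) * Real.exp ((1:ℝ)/2) * |x| := by
        have := mul_le_mul_of_nonneg_right h1 (Real.exp_pos ((1:ℝ)/2)).le
        nlinarith [Real.exp_pos ((1:ℝ)/2)]
    _ = 2 * |x| := by
        rw [mul_assoc 2, he]; ring

lemma bound2 {x t : ℝ} (hx : x ≠ 0) (ht : 0 < t) :
    |2 * x / t ^ ((3:ℝ)/2) * stdGaussPDF (x / Real.sqrt t)| ≤ 12 / x ^ 2 := by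
  have hst : (0:ℝ) < Real.sqrt t := Real.sqrt_pos.2 ht
  set u := |x| / Real.sqrt t with hu
  have hupos : 0 < u := div_pos (abs_pos.2 hx) hst
  have hxa : (0:ℝ) < |x| := abs_pos.2 hx
  have hsq : (x / Real.sqrt t) ^ 2 = u ^ 2 := by
    rw [hu, div_pow, div_pow, sq_abs]
  have hpdf : stdGaussPDF (x / Real.sqrt t) = (Real.sqrt (2 * Real.pi))⁻¹ * Real.exp (-u^2/2) := by
    rw [stdGaussPDF, hsq]
  have hpdfnn : 0 ≤ stdGaussPDF (x / Real.sqrt t) := by rw [hpdf]; positivity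
  have hrpow : (0:ℝ) < t ^ ((3:ℝ)/2) := by rw [rpow_three_halves ht]; positivity
  rw [abs_mul, abs_div]
  have habs : |t ^ ((3:ℝ)/2)| = t ^ ((3:ℝ)/2) := abs_of_pos hrpow
  rw [habs, abs_of_nonneg hpdfnn, abs_mul, abs_two]
  -- 2|x| / t^{3/2} = 2 u^3 / x^2
  have hxt : |x| = u * Real.sqrt t := by rw [hu]; field_simp
  have hkey : 2 * |x| / t ^ ((3:ℝ)/2) = 2 * u ^ 3 / x ^ 2 := by
    rw [rpow_three_halves ht, hxt]
    have h3 : x ^ 2 = (u * Real.sqrt t) ^ 2 := by rw [← hxt, sq_abs]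
    rw [h3]
    have h4 : t = Real.sqrt t * Real.sqrt t := (Real.mul_self_sqrt ht.le).symm
    field_simp
    rw [Real.sq_sqrt ht.le]
  rw [hkey, hpdf]
  have hsp1 : (1:ℝ) ≤ Real.sqrt (2 * Real.pi) := by
    rw [show (1:ℝ) = Real.sqrt 1 by simp]
    exact Real.sqrt_le_sqrt (by nlinarith [Real.pi_gt_three])
  have h6 : u^3 * Real.exp (-u^2/2) ≤ 6 := key_ineq2 hupos.le
  have hx2 : (0:ℝ) < x ^ 2 := by positivity
  rw [div_mul_eq_mul_div, div_le_div_iff₀ hx2 hx2]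
  have hinvle : (Real.sqrt (2 * Real.pi))⁻¹ ≤ 1 := by
    rw [inv_le_one_iff₀]; right; exact hsp1
  have hfin : 2 * u ^ 3 * ((Real.sqrt (2*Real.pi))⁻¹ * Real.exp (-u^2/2)) ≤ 12 := by
    have hinv0 : (0:ℝ) < (Real.sqrt (2 * Real.pi))⁻¹ := by positivity
    nlinarith [Real.exp_pos (-u^2/2), pow_pos hupos 3]
  nlinarith

end AuxStmt8

/-- if `A > 0` a.s. and `ζ(r) := E[G(r,A)]`, then on `(−∞,0)` the
function `ζ` is twice differentiable with `ζ'(r) = E[−(2/√A) n(r/√A)]` and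
`ζ''(r) = E[(2r/A^{3/2}) n(r/√A)] ≤ 0` (so `ζ` is concave on `(−∞,0)`), and
`|ζ'(r)| ≤ 2/(|r|√(2πe))` for every `r < 0`. -/
theorem stmt_8 {Ω : Type*} [MeasurableSpace Ω] {μ : Measure Ω} [IsProbabilityMeasure μ]
    (A : Ω → ℝ) (hA_meas : Measurable A) (hA_pos : ∀ᵐ ω ∂μ, 0 < A ω) :
    (∀ r : ℝ, r < 0 →
      HasDerivAt (fun x => ∫ ω, Gfun x (A ω) ∂μ)
        (∫ ω, -(2 / Real.sqrt (A ω)) * stdGaussPDF (r / Real.sqrt (A ω)) ∂μ) r ∧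
      HasDerivAt (fun x => ∫ ω, -(2 / Real.sqrt (A ω)) * stdGaussPDF (x / Real.sqrt (A ω)) ∂μ)
        (∫ ω, 2 * r / A ω ^ ((3 : ℝ) / 2) * stdGaussPDF (r / Real.sqrt (A ω)) ∂μ) r ∧
      (∫ ω, 2 * r / A ω ^ ((3 : ℝ) / 2) * stdGaussPDF (r / Real.sqrt (A ω)) ∂μ) ≤ 0 ∧
      |∫ ω, -(2 / Real.sqrt (A ω)) * stdGaussPDF (r / Real.sqrt (A ω)) ∂μ|
        ≤ 2 / (|r| * Real.sqrt (2 * Real.pi * Real.exp 1))) ∧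
    ConcaveOn ℝ (Set.Iio 0) (fun x => ∫ ω, Gfun x (A ω) ∂μ) := by
  have cdf_cont : Continuous stdGaussCDF :=
    continuous_iff_continuousAt.2 fun x => (hasDerivAt_cdf x).continuousAt
  have hsA : Measurable fun ω => Real.sqrt (A ω) :=
    Real.continuous_sqrt.measurable.comp hA_meas
  -- measurability of the three integrand families
  have measF : ∀ x : ℝ, AEStronglyMeasurable (fun ω => Gfun x (A ω)) μ := by
    intro x
    have : Measurable fun ω => Gfun x (A ω) := by
      have h1 : Measurable fun ω => -x / Real.sqrt (A ω) := measurable_const.div hsA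
      exact (((continuous_const.mul cdf_cont).sub continuous_const).measurable.comp h1)
    exact this.aestronglyMeasurable
  have measF1 : ∀ x : ℝ, AEStronglyMeasurable
      (fun ω => -(2 / Real.sqrt (A ω)) * stdGaussPDF (x / Real.sqrt (A ω))) μ := by
    intro x
    have : Measurable fun ω => -(2 / Real.sqrt (A ω)) * stdGaussPDF (x / Real.sqrt (A ω)) :=
      ((measurable_const.div hsA).neg).mul
        (pdf_cont.measurable.comp (measurable_const.div hsA))
    exact this.aestronglyMeasurable
  have measF2 : ∀ x : ℝ, AEStronglyMeasurable
      (fun ω => 2 * x / A ω ^ ((3:ℝ)/2) * stdGaussPDF (x / Real.sqrt (A ω))) μ := by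
    intro x
    have hr : Measurable fun ω => A ω ^ ((3:ℝ)/2) :=
      (Real.continuous_rpow_const (by norm_num)).measurable.comp hA_meas
    have : Measurable fun ω => 2 * x / A ω ^ ((3:ℝ)/2) * stdGaussPDF (x / Real.sqrt (A ω)) :=
      (measurable_const.div hr).mul
        (pdf_cont.measurable.comp (measurable_const.div hsA))
    exact this.aestronglyMeasurable
  -- |Gfun x t| ≤ 3 always
  have hGbd : ∀ x t : ℝ, ‖Gfun x t‖ ≤ 3 := by
    intro x t
    rw [Real.norm_eq_abs, abs_le]
    constructor <;> simp only [Gfun] <;>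
      [linarith [cdf_nonneg (-x / Real.sqrt t)]; linarith [cdf_le_one (-x / Real.sqrt t)]]
  have intF : ∀ x : ℝ, Integrable (fun ω => Gfun x (A ω)) μ := fun x =>
    (integrable_const (3:ℝ)).mono' (measF x)
      (Filter.Eventually.of_forall fun ω => hGbd x (A ω))
  -- ball facts
  have ball_facts : ∀ r : ℝ, r < 0 → ∀ x ∈ Metric.ball r (-r/2), x ≠ 0 ∧ -r/2 ≤ |x| := by
    intro r hr x hx
    rw [Metric.mem_ball, Real.dist_eq, abs_lt] at hx
    have hx0 : x < r / 2 := by linarith [hx.2]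
    have hxneg : x < 0 := by linarith
    constructor
    · exact ne_of_lt hxneg
    · rw [abs_of_neg hxneg]; linarith
  -- main double statement for each r < 0
  have main : ∀ r : ℝ, r < 0 →
      (HasDerivAt (fun x => ∫ ω, Gfun x (A ω) ∂μ)
        (∫ ω, -(2 / Real.sqrt (A ω)) * stdGaussPDF (r / Real.sqrt (A ω)) ∂μ) r ∧
       Integrable (fun ω => -(2 / Real.sqrt (A ω)) * stdGaussPDF (r / Real.sqrt (A ω))) μ) ∧
      (HasDerivAt (fun x => ∫ ω, -(2 / Real.sqrt (A ω)) * stdGaussPDF (x / Real.sqrt (A ω)) ∂μ)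
        (∫ ω, 2 * r / A ω ^ ((3:ℝ)/2) * stdGaussPDF (r / Real.sqrt (A ω)) ∂μ) r ∧
       Integrable (fun ω => 2 * r / A ω ^ ((3:ℝ)/2) * stdGaussPDF (r / Real.sqrt (A ω))) μ) := by
    intro r hr
    have hε : (0:ℝ) < -r/2 := by linarith
    have hra : (0:ℝ) < |r| := abs_pos.2 (ne_of_lt hr)
    -- first derivative
    have h1 := hasDerivAt_integral_of_dominated_loc_of_deriv_le (μ := μ)
      (F := fun x ω => Gfun x (A ω))
      (F' := fun x ω => -(2 / Real.sqrt (A ω)) * stdGaussPDF (x / Real.sqrt (A ω)))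
      (x₀ := r) (bound := fun _ => 4 / (|r| * Real.sqrt (2 * Real.pi * Real.exp 1)))
      (Metric.ball_mem_nhds r hε) (Filter.Eventually.of_forall fun x => measF x) (intF r) (measF1 r)
      (by
        filter_upwards [hA_pos] with ω hω
        intro x hx
        obtain ⟨hx0, hxabs⟩ := ball_facts r hr x hx
        rw [Real.norm_eq_abs, abs_mul, abs_neg, abs_div, abs_two,
          abs_of_nonneg (Real.sqrt_nonneg _), abs_of_nonneg (pdf_nonneg _)]
        have hb := bound1 hx0 hω
        have hstep : 2 / (|x| * Real.sqrt (2 * Real.pi * Real.exp 1))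
            ≤ 4 / (|r| * Real.sqrt (2 * Real.pi * Real.exp 1)) := by
          have hxa : (0:ℝ) < |x| := abs_pos.2 hx0
          have hs : (0:ℝ) < Real.sqrt (2 * Real.pi * Real.exp 1) := by positivity
          rw [div_le_div_iff₀ (by positivity) (by positivity)]
          have : |r| ≤ 2 * |x| := by
            rw [abs_of_neg hr]; linarith
          nlinarith
        exact le_trans hb hstep)
      (integrable_const _)
      (by
        filter_upwards [hA_pos] with ω hω
        intro x _
        exact hasDerivAt_Gfun hω x)
    -- second derivative
    have h2 := hasDerivAt_integral_of_dominated_loc_of_deriv_le (μ := μ)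
      (F := fun x ω => -(2 / Real.sqrt (A ω)) * stdGaussPDF (x / Real.sqrt (A ω)))
      (F' := fun x ω => 2 * x / A ω ^ ((3:ℝ)/2) * stdGaussPDF (x / Real.sqrt (A ω)))
      (x₀ := r) (bound := fun _ => 48 / r ^ 2)
      (Metric.ball_mem_nhds r hε) (Filter.Eventually.of_forall fun x => measF1 x) h1.1 (measF2 r)
      (by
        filter_upwards [hA_pos] with ω hω
        intro x hx
        obtain ⟨hx0, hxabs⟩ := ball_facts r hr x hx
        rw [Real.norm_eq_abs]
        have hb := bound2 hx0 hω
        have hstep : (12:ℝ) / x ^ 2 ≤ 48 / r ^ 2 := by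
          have hx2 : (0:ℝ) < x ^ 2 := by positivity
          have hr2 : (0:ℝ) < r ^ 2 := by nlinarith
          rw [div_le_div_iff₀ hx2 hr2]
          have h1 : -r/2 ≤ |x| := hxabs
          have h2 : (r/2) ^ 2 ≤ x ^ 2 := by
            have := sq_abs x
            nlinarith
          nlinarith
        exact le_trans hb hstep)
      (integrable_const _)
      (by
        filter_upwards [hA_pos] with ω hω
        intro x _
        exact hasDerivAt_Gderiv hω x)
    exact ⟨⟨h1.2, h1.1⟩, ⟨h2.2, h2.1⟩⟩
  -- second-derivative integrand is nonpositive
  have hζ'' : ∀ r : ℝ, r < 0 →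
      (∫ ω, 2 * r / A ω ^ ((3:ℝ)/2) * stdGaussPDF (r / Real.sqrt (A ω)) ∂μ) ≤ 0 := by
    intro r hr
    apply integral_nonpos_of_ae
    filter_upwards [hA_pos] with ω hω
    have hrp : (0:ℝ) < A ω ^ ((3:ℝ)/2) := by
      rw [rpow_three_halves hω]; positivity
    have h2r : 2 * r / A ω ^ ((3:ℝ)/2) ≤ 0 :=
      div_nonpos_iff.2 (Or.inr ⟨by linarith, hrp.le⟩)
    exact mul_nonpos_of_nonpos_of_nonneg h2r (pdf_nonneg _)
  -- bound on the first derivative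
  have hζ' : ∀ r : ℝ, r < 0 →
      |∫ ω, -(2 / Real.sqrt (A ω)) * stdGaussPDF (r / Real.sqrt (A ω)) ∂μ|
        ≤ 2 / (|r| * Real.sqrt (2 * Real.pi * Real.exp 1)) := by
    intro r hr
    have hint := ((main r hr).1).2
    have habs : |∫ ω, -(2 / Real.sqrt (A ω)) * stdGaussPDF (r / Real.sqrt (A ω)) ∂μ|
        ≤ ∫ ω, |(-(2 / Real.sqrt (A ω)) * stdGaussPDF (r / Real.sqrt (A ω)))| ∂μ := by
      have := norm_integral_le_integral_norm
          (fun ω => -(2 / Real.sqrt (A ω)) * stdGaussPDF (r / Real.sqrt (A ω))) (μ := μ)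
      simp only [Real.norm_eq_abs] at this
      exact this
    have hptwise : ∀ᵐ ω ∂μ, |(-(2 / Real.sqrt (A ω)) * stdGaussPDF (r / Real.sqrt (A ω)))|
        ≤ 2 / (|r| * Real.sqrt (2 * Real.pi * Real.exp 1)) := by
      filter_upwards [hA_pos] with ω hω
      rw [abs_mul, abs_neg, abs_div, abs_two,
        abs_of_nonneg (Real.sqrt_nonneg _), abs_of_nonneg (pdf_nonneg _)]
      exact bound1 (ne_of_lt hr) hω
    have hmono : (∫ ω, |(-(2 / Real.sqrt (A ω)) * stdGaussPDF (r / Real.sqrt (A ω)))| ∂μ)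
        ≤ ∫ _, 2 / (|r| * Real.sqrt (2 * Real.pi * Real.exp 1)) ∂μ :=
      integral_mono_ae hint.abs (integrable_const _) hptwise
    have hconst : (∫ _, (2 / (|r| * Real.sqrt (2 * Real.pi * Real.exp 1)) : ℝ) ∂μ)
        = 2 / (|r| * Real.sqrt (2 * Real.pi * Real.exp 1)) := by
      simp
    linarith [habs, hmono, hconst.le]
  refine ⟨fun r hr => ⟨(main r hr).1.1, (main r hr).2.1, hζ'' r hr, hζ' r hr⟩, ?_⟩
  -- concavity
  have hopen : ∀ r : ℝ, r ∈ Set.Iio (0:ℝ) → Set.Iio (0:ℝ) ∈ nhds r := fun r hr =>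
    Iio_mem_nhds hr
  refine concaveOn_of_deriv2_nonpos (convex_Iio 0) ?_ ?_ ?_ ?_
  · exact fun r hr => ((main r hr).1.1).continuousAt.continuousWithinAt
  · rw [interior_Iio]
    exact fun r hr => ((main r hr).1.1).differentiableAt.differentiableWithinAt
  · rw [interior_Iio]
    intro r hr
    have hev : (fun x => ∫ ω, -(2 / Real.sqrt (A ω)) * stdGaussPDF (x / Real.sqrt (A ω)) ∂μ)
        =ᶠ[nhds r] deriv (fun x => ∫ ω, Gfun x (A ω) ∂μ) := by
      filter_upwards [hopen r hr] with x hx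
      exact ((main x hx).1.1).deriv.symm
    have : HasDerivAt (deriv (fun x => ∫ ω, Gfun x (A ω) ∂μ))
        (∫ ω, 2 * r / A ω ^ ((3:ℝ)/2) * stdGaussPDF (r / Real.sqrt (A ω)) ∂μ) r :=
      ((main r hr).2.1).congr_of_eventuallyEq hev.symm
    exact this.differentiableAt.differentiableWithinAt
  · rw [interior_Iio]
    intro r hr
    have hev : (fun x => ∫ ω, -(2 / Real.sqrt (A ω)) * stdGaussPDF (x / Real.sqrt (A ω)) ∂μ)
        =ᶠ[nhds r] deriv (fun x => ∫ ω, Gfun x (A ω) ∂μ) := by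
      filter_upwards [hopen r hr] with x hx
      exact ((main x hx).1.1).deriv.symm
    have hd2 : HasDerivAt (deriv (fun x => ∫ ω, Gfun x (A ω) ∂μ))
        (∫ ω, 2 * r / A ω ^ ((3:ℝ)/2) * stdGaussPDF (r / Real.sqrt (A ω)) ∂μ) r :=
      ((main r hr).2.1).congr_of_eventuallyEq hev.symm
    have : deriv^[2] (fun x => ∫ ω, Gfun x (A ω) ∂μ) r
        = deriv (deriv (fun x => ∫ ω, Gfun x (A ω) ∂μ)) r := by
      simp [Function.iterate_succ, Function.iterate_zero]
    rw [this, hd2.deriv]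
    exact hζ'' r hr
end

section
/- Fix c ∈ (−1, 1) and set k := 5 − 4√(1−c²). Define φ : ℝ × ℝ × ℝ → ℝ by φ(r,z,t) := r⁴ + 6k·r²z²·t + 3k·(r² + k·z⁴ − 4c·r·z²)·t² + k·((7k + 8c²)·z² − 4c·r)·t³ + (7k²/4 + 2c²k)·t⁴. Then φ(r,z,0) = r⁴ for all r, z, and φ satisfies the partial differential equation (1/2)·k·z²·∂²φ/∂r² − c·z·∂²φ/∂r∂z + (1/2)·∂²φ/∂z² = ∂φ/∂t at every point (r,z,t) ∈ ℝ³. -/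
/-- Derivative of a general quartic polynomial. -/
lemma dp4 (a b c d e x : ℝ) :
    deriv (fun x : ℝ => a * x ^ 4 + b * x ^ 3 + c * x ^ 2 + d * x + e) x
      = 4 * a * x ^ 3 + 3 * b * x ^ 2 + 2 * c * x + d := by
  have h : HasDerivAt (fun x : ℝ => a * x ^ 4 + b * x ^ 3 + c * x ^ 2 + d * x + e)
      (4 * a * x ^ 3 + 3 * b * x ^ 2 + 2 * c * x + d) x := by
    have h4 := (hasDerivAt_pow 4 x).const_mul a
    have h3 := (hasDerivAt_pow 3 x).const_mul b
    have h2 := (hasDerivAt_pow 2 x).const_mul c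
    have h1 := (hasDerivAt_id x).const_mul d
    have h0 := (((h4.add h3).add h2).add h1).add_const e
    refine HasDerivAt.congr_deriv h0 ?_
    push_cast
    ring
  exact h.deriv

/-- for `c ∈ (−1,1)` and `k = 5 − 4√(1−c²)`, the explicit degree-4
polynomial `φ(r,z,t)` satisfies `φ(r,z,0) = r⁴` and the PDE
`(1/2) k z² ∂²φ/∂r² − c z ∂²φ/∂r∂z + (1/2) ∂²φ/∂z² = ∂φ/∂t` everywhere. -/
theorem stmt_14 (c : ℝ) (hc : c ∈ Set.Ioo (-1 : ℝ) 1)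
    (k : ℝ) (hk : k = 5 - 4 * Real.sqrt (1 - c ^ 2))
    (φ : ℝ → ℝ → ℝ → ℝ)
    (hφ : ∀ r z t : ℝ, φ r z t =
      r ^ 4 + 6 * k * r ^ 2 * z ^ 2 * t
        + 3 * k * (r ^ 2 + k * z ^ 4 - 4 * c * r * z ^ 2) * t ^ 2
        + k * ((7 * k + 8 * c ^ 2) * z ^ 2 - 4 * c * r) * t ^ 3
        + (7 * k ^ 2 / 4 + 2 * c ^ 2 * k) * t ^ 4) :
    (∀ r z : ℝ, φ r z 0 = r ^ 4) ∧
    (∀ r z t : ℝ,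
      1 / 2 * k * z ^ 2 * deriv (fun r' => deriv (fun r'' => φ r'' z t) r') r
        - c * z * deriv (fun z' => deriv (fun r' => φ r' z' t) r) z
        + 1 / 2 * deriv (fun z' => deriv (fun z'' => φ r z'' t) z') z
      = deriv (fun t' => φ r z t') t) := by
  -- first partial in r
  have hDr : ∀ r z t : ℝ, deriv (fun r' => φ r' z t) r
      = 4 * r ^ 3 + (6 * k * z ^ 2 * t + 3 * k * t ^ 2) * 2 * r
        + (-12 * c * k * z ^ 2 * t ^ 2 - 4 * c * k * t ^ 3) := by
    intro r z t
    have hfun : (fun r' => φ r' z t) = fun r' : ℝ =>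
        (1 : ℝ) * r' ^ 4 + 0 * r' ^ 3 + (6 * k * z ^ 2 * t + 3 * k * t ^ 2) * r' ^ 2
          + (-12 * c * k * z ^ 2 * t ^ 2 - 4 * c * k * t ^ 3) * r'
          + (3 * k ^ 2 * z ^ 4 * t ^ 2 + k * (7 * k + 8 * c ^ 2) * z ^ 2 * t ^ 3
              + (7 * k ^ 2 / 4 + 2 * c ^ 2 * k) * t ^ 4) := by
      funext r'; rw [hφ]; ring
    rw [hfun, dp4]; ring
  constructor
  · intro r z; rw [hφ]; ring
  intro r z t
  -- second partial in r
  have hDrr : deriv (fun r' => deriv (fun r'' => φ r'' z t) r') r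
      = 12 * r ^ 2 + 12 * k * z ^ 2 * t + 6 * k * t ^ 2 := by
    have hfun : (fun r' => deriv (fun r'' => φ r'' z t) r') = fun r' : ℝ =>
        (0 : ℝ) * r' ^ 4 + 4 * r' ^ 3 + 0 * r' ^ 2
          + ((6 * k * z ^ 2 * t + 3 * k * t ^ 2) * 2) * r'
          + (-12 * c * k * z ^ 2 * t ^ 2 - 4 * c * k * t ^ 3) := by
      funext r'; rw [hDr r' z t]; ring
    rw [hfun, dp4]; ring
  -- mixed partial
  have hDrz : deriv (fun z' => deriv (fun r' => φ r' z' t) r) z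
      = 24 * k * r * z * t - 24 * c * k * z * t ^ 2 := by
    have hfun : (fun z' => deriv (fun r' => φ r' z' t) r) = fun z' : ℝ =>
        (0 : ℝ) * z' ^ 4 + 0 * z' ^ 3
          + (12 * k * r * t - 12 * c * k * t ^ 2) * z' ^ 2 + 0 * z'
          + (4 * r ^ 3 + 6 * k * t ^ 2 * r - 4 * c * k * t ^ 3) := by
      funext z'; rw [hDr r z' t]; ring
    rw [hfun, dp4]; ring
  -- first partial in z
  have hDz : ∀ z' : ℝ, deriv (fun z'' => φ r z'' t) z'
      = 12 * k ^ 2 * t ^ 2 * z' ^ 3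
        + (6 * k * r ^ 2 * t - 12 * c * r * k * t ^ 2
            + k * (7 * k + 8 * c ^ 2) * t ^ 3) * 2 * z' := by
    intro z'
    have hfun : (fun z'' => φ r z'' t) = fun z'' : ℝ =>
        (3 * k ^ 2 * t ^ 2) * z'' ^ 4 + 0 * z'' ^ 3
          + (6 * k * r ^ 2 * t - 12 * c * r * k * t ^ 2
              + k * (7 * k + 8 * c ^ 2) * t ^ 3) * z'' ^ 2 + 0 * z''
          + (r ^ 4 + 3 * k * r ^ 2 * t ^ 2 - 4 * c * k * r * t ^ 3
              + (7 * k ^ 2 / 4 + 2 * c ^ 2 * k) * t ^ 4) := by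
      funext z''; rw [hφ]; ring
    rw [hfun, dp4]; ring
  -- second partial in z
  have hDzz : deriv (fun z' => deriv (fun z'' => φ r z'' t) z') z
      = 36 * k ^ 2 * t ^ 2 * z ^ 2
        + (12 * k * r ^ 2 * t - 24 * c * r * k * t ^ 2
            + 2 * k * (7 * k + 8 * c ^ 2) * t ^ 3) := by
    have hfun : (fun z' => deriv (fun z'' => φ r z'' t) z') = fun z' : ℝ =>
        (0 : ℝ) * z' ^ 4 + (12 * k ^ 2 * t ^ 2) * z' ^ 3 + 0 * z' ^ 2
          + ((6 * k * r ^ 2 * t - 12 * c * r * k * t ^ 2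
              + k * (7 * k + 8 * c ^ 2) * t ^ 3) * 2) * z' + 0 := by
      funext z'; rw [hDz z']; ring
    rw [hfun, dp4]; ring
  -- partial in t
  have hDt : deriv (fun t' => φ r z t') t
      = 6 * k * r ^ 2 * z ^ 2
        + 2 * (3 * k * (r ^ 2 + k * z ^ 4 - 4 * c * r * z ^ 2)) * t
        + 3 * (k * ((7 * k + 8 * c ^ 2) * z ^ 2 - 4 * c * r)) * t ^ 2
        + 4 * (7 * k ^ 2 / 4 + 2 * c ^ 2 * k) * t ^ 3 := by
    have hfun : (fun t' => φ r z t') = fun t' : ℝ =>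
        (7 * k ^ 2 / 4 + 2 * c ^ 2 * k) * t' ^ 4
          + (k * ((7 * k + 8 * c ^ 2) * z ^ 2 - 4 * c * r)) * t' ^ 3
          + (3 * k * (r ^ 2 + k * z ^ 4 - 4 * c * r * z ^ 2)) * t' ^ 2
          + (6 * k * r ^ 2 * z ^ 2) * t' + r ^ 4 := by
      funext t'; rw [hφ]; ring
    rw [hfun, dp4]; ring
  rw [hDrr, hDrz, hDzz, hDt]; ring
end

section
/- Fix r, z ∈ ℝ and T > 0. Define k : (−1,1) → ℝ by k(c) := 5 − 4√(1−c²), and ψ : (−1,1) → ℝ by ψ(c) := r⁴ + 6k(c)·r²z²·T + 3k(c)·(r² + k(c)·z⁴ − 4c·r·z²)·T² + k(c)·((7k(c) + 8c²)·z² − 4c·r)·T³ + (7k(c)²/4 + 2c²k(c))·T⁴. Then ψ is differentiable at c = 0 with ψ'(0) = −12·r·z²·T² − 4·r·T³. In particular, ψ'(0) ≠ 0 whenever r ≠ 0 and T > 0. -/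
/-- with `k(c) = 5 − 4√(1−c²)` and `ψ(c)` the explicit
fourth-moment value function, `ψ` is differentiable at `c = 0` with
`ψ'(0) = −12 r z² T² − 4 r T³`, which is nonzero whenever `r ≠ 0` (and `T > 0`). -/
theorem stmt_15 (r z T : ℝ) (hT : 0 < T)
    (k : ℝ → ℝ) (hk : ∀ c, k c = 5 - 4 * Real.sqrt (1 - c ^ 2))
    (ψ : ℝ → ℝ)
    (hψ : ∀ c, ψ c =
      r ^ 4 + 6 * k c * r ^ 2 * z ^ 2 * T
        + 3 * k c * (r ^ 2 + k c * z ^ 4 - 4 * c * r * z ^ 2) * T ^ 2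
        + k c * ((7 * k c + 8 * c ^ 2) * z ^ 2 - 4 * c * r) * T ^ 3
        + (7 * (k c) ^ 2 / 4 + 2 * c ^ 2 * k c) * T ^ 4) :
    HasDerivAt ψ (-12 * r * z ^ 2 * T ^ 2 - 4 * r * T ^ 3) 0 ∧
    (r ≠ 0 → -12 * r * z ^ 2 * T ^ 2 - 4 * r * T ^ 3 ≠ 0) := by
  have hk0 : k 0 = 1 := by rw [hk]; norm_num
  -- k has derivative 0 at 0
  have hkd : HasDerivAt k 0 0 := by
    have h1 : HasDerivAt (fun c : ℝ => 1 - c ^ 2) (0 - 2 * 0 ^ (2 - 1)) 0 :=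
      (hasDerivAt_const 0 (1 : ℝ)).sub (hasDerivAt_pow 2 0)
    have h2 := h1.sqrt (by norm_num)
    have h3 := (h2.const_mul 4).const_sub 5
    have hfun : k = fun c : ℝ => 5 - 4 * Real.sqrt (1 - c ^ 2) := funext hk
    rw [hfun]
    refine h3.congr_deriv ?_
    norm_num
  have hid : HasDerivAt (fun c : ℝ => c) 1 0 := hasDerivAt_id 0
  have hsq : HasDerivAt (fun c : ℝ => c ^ 2) (↑2 * 0 ^ (2 - 1)) 0 := hasDerivAt_pow 2 0
  have hψf : ψ = fun c =>
      r ^ 4 + 6 * k c * r ^ 2 * z ^ 2 * T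
        + 3 * k c * (r ^ 2 + k c * z ^ 4 - 4 * c * r * z ^ 2) * T ^ 2
        + k c * ((7 * k c + 8 * c ^ 2) * z ^ 2 - 4 * c * r) * T ^ 3
        + (7 * (k c) ^ 2 / 4 + 2 * c ^ 2 * k c) * T ^ 4 := funext hψ
  have hA : HasDerivAt (fun _ : ℝ => r ^ 4) 0 0 := hasDerivAt_const 0 _
  have hB := (((hkd.const_mul 6).mul_const (r ^ 2)).mul_const (z ^ 2)).mul_const T
  have hInner1 := ((hasDerivAt_const 0 (r ^ 2)).add (hkd.mul_const (z ^ 4))).sub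
      (((hid.const_mul 4).mul_const r).mul_const (z ^ 2))
  have hC := ((hkd.const_mul 3).mul hInner1).mul_const (T ^ 2)
  have hInner2 := (((hkd.const_mul 7).add (hsq.const_mul 8)).mul_const (z ^ 2)).sub
      ((hid.const_mul 4).mul_const r)
  have hD := (hkd.mul hInner2).mul_const (T ^ 3)
  have hE := ((((hkd.pow 2).const_mul 7).div_const 4).add ((hsq.const_mul 2).mul hkd)).mul_const
      (T ^ 4)
  have H := (((hA.add hB).add hC).add hD).add hE
  constructor
  · rw [hψf]
    refine H.congr_deriv ?_
    simp only [hk0]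
    norm_num
    ring
  · intro hr
    have key : -12 * r * z ^ 2 * T ^ 2 - 4 * r * T ^ 3 = -4 * r * T ^ 2 * (3 * z ^ 2 + T) := by
      ring
    rw [key]
    have h1 : (0:ℝ) < 3 * z ^ 2 + T := by positivity
    have h2 : (0:ℝ) < T ^ 2 := by positivity
    exact mul_ne_zero (mul_ne_zero (by simpa using hr) h2.ne') h1.ne'
end

section
/- Let T > 0, z₀ > 0 and m ∈ ℝ, and let γ be the Gaussian measure on ℝ with mean 0 and variance T. Let φ : ℝ → [0,∞) be a convex function, not identically zero, with φ(x) = 0 for every x ≤ m + 3z₀. Then ∫ φ(m − 3z₀·(exp(u − T/2) − 1)) dγ(u) = 0, while ∫ φ(m + z₀·(exp(u − T/2) − 1)) dγ(u) > 0 (the second integral taken in [0, ∞], possibly infinite). -/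
open MeasureTheory ProbabilityTheory

/-- with `γ` the Gaussian measure of mean `0` and variance `T > 0`,
`z₀ > 0`, and `φ : ℝ → [0,∞)` convex, not identically zero, vanishing on
`(−∞, m + 3z₀]`, the mirror-coupling cost `∫ φ(m − 3z₀(e^{u−T/2} − 1)) dγ(u)`
vanishes while the synchronous-coupling cost
`∫ φ(m + z₀(e^{u−T/2} − 1)) dγ(u)` is strictly positive (in `[0,∞]`). -/
theorem stmt_17 (T : ℝ) (hT : 0 < T) (z₀ m : ℝ) (hz₀ : 0 < z₀)
    (φ : ℝ → ℝ) (hφ_conv : ConvexOn ℝ Set.univ φ) (hφ_nonneg : ∀ x, 0 ≤ φ x)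
    (hφ_ne : ∃ x, φ x ≠ 0) (hφ_zero : ∀ x, x ≤ m + 3 * z₀ → φ x = 0) :
    (∫⁻ u, ENNReal.ofReal (φ (m - 3 * z₀ * (Real.exp (u - T / 2) - 1)))
        ∂(gaussianReal 0 T.toNNReal)) = 0 ∧
    0 < ∫⁻ u, ENNReal.ofReal (φ (m + z₀ * (Real.exp (u - T / 2) - 1)))
        ∂(gaussianReal 0 T.toNNReal) := by
  have hv : T.toNNReal ≠ 0 := by
    simp [Real.toNNReal_eq_zero, not_le, hT]
  constructor
  · have h0 : ∀ u : ℝ, φ (m - 3 * z₀ * (Real.exp (u - T / 2) - 1)) = 0 := by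
      intro u
      apply hφ_zero
      have := Real.exp_pos (u - T / 2)
      nlinarith
    simp [h0]
  · obtain ⟨x₀, hx₀⟩ := hφ_ne
    have hφx₀ : 0 < φ x₀ := lt_of_le_of_ne (hφ_nonneg x₀) (Ne.symm hx₀)
    have hx₀gt : m + 3 * z₀ < x₀ := by
      by_contra h
      exact hx₀ (hφ_zero x₀ (not_lt.mp h))
    -- convexity: φ x ≥ φ x₀ for x ≥ x₀
    have hmono : ∀ x, x₀ ≤ x → φ x₀ ≤ φ x := by
      intro x hx
      rcases eq_or_lt_of_le hx with rfl | hx'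
      · exact le_rfl
      · set a := m + 3 * z₀ with ha
        have hax : a < x := lt_trans hx₀gt (lt_of_le_of_lt le_rfl hx')
        have hden : 0 < x - a := by linarith
        set t : ℝ := (x - x₀) / (x - a) with ht
        set s : ℝ := (x₀ - a) / (x - a) with hs
        have ht0 : 0 ≤ t := div_nonneg (by linarith) hden.le
        have hs0 : 0 ≤ s := div_nonneg (by linarith) hden.le
        have hts : t + s = 1 := by
          rw [ht, hs, ← add_div, div_eq_one_iff_eq hden.ne']
          ring
        have hcomb : t • a + s • x = x₀ := by
          rw [smul_eq_mul, smul_eq_mul, ht, hs, div_mul_eq_mul_div, div_mul_eq_mul_div,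
            ← add_div, div_eq_iff hden.ne']
          ring
        have := hφ_conv.2 (Set.mem_univ a) (Set.mem_univ x) ht0 hs0 hts
        rw [hcomb] at this
        have hφa : φ a = 0 := hφ_zero a le_rfl
        rw [hφa] at this
        simp only [smul_eq_mul, mul_zero, zero_add] at this
        have hs1 : s ≤ 1 := by
          rw [← hts]; linarith
        calc φ x₀ ≤ s * φ x := this
          _ ≤ 1 * φ x := mul_le_mul_of_nonneg_right hs1 (hφ_nonneg x)
          _ = φ x := one_mul _
    -- the ray where the argument exceeds x₀
    set c : ℝ := Real.log ((x₀ - m) / z₀ + 1) + T / 2 with hc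
    have hray : ∀ u : ℝ, c ≤ u → x₀ ≤ m + z₀ * (Real.exp (u - T / 2) - 1) := by
      intro u hu
      have hpos : 0 < (x₀ - m) / z₀ + 1 := by
        have : 0 < (x₀ - m) / z₀ := div_pos (by linarith) hz₀
        linarith
      rw [hc] at hu
      have hle : (x₀ - m) / z₀ + 1 ≤ Real.exp (u - T / 2) := by
        rw [← Real.exp_log hpos]
        exact Real.exp_le_exp.mpr (by linarith)
      have h3 : (x₀ - m) / z₀ ≤ Real.exp (u - T / 2) - 1 := by linarith
      have h2 : x₀ - m ≤ z₀ * (Real.exp (u - T / 2) - 1) := by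
        calc x₀ - m = z₀ * ((x₀ - m) / z₀) := by field_simp
          _ ≤ z₀ * (Real.exp (u - T / 2) - 1) := mul_le_mul_of_nonneg_left h3 hz₀.le
      linarith
    have hμpos : 0 < gaussianReal 0 T.toNNReal (Set.Ici c) := by
      rw [pos_iff_ne_zero]
      intro h
      have := gaussianReal_absolutelyContinuous' 0 hv h
      simp [Real.volume_Ici] at this
    have key : ENNReal.ofReal (φ x₀) * gaussianReal 0 T.toNNReal (Set.Ici c)
        ≤ ∫⁻ u, ENNReal.ofReal (φ (m + z₀ * (Real.exp (u - T / 2) - 1)))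
            ∂(gaussianReal 0 T.toNNReal) := by
      rw [← setLIntegral_const]
      exact le_trans
        (setLIntegral_mono' measurableSet_Ici fun u hu =>
          ENNReal.ofReal_le_ofReal (hmono _ (hray u hu)))
        (setLIntegral_le_lintegral _ _)
    exact lt_of_lt_of_le
      (ENNReal.mul_pos (ENNReal.ofReal_pos.mpr hφx₀).ne' hμpos.ne') key
end
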